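/- For k < 0, the complex eigenvalues of the 4×4 matrix M = [[0,−1,−k,0],[1,0,0,−k],[1,0,0,−1],[0,1,1,0]] (viewed over ℂ) are exactly the four numbers ε₁·√(−k) + ε₂·i with ε₁, ε₂ ∈ {+1,−1}; these four numbers are pairwise distinct, and each of them has nonzero real part and nonzero imaginary part (in particular none of them is zero, real, or purely imaginary). Hence the equilibrium at the origin is a nondegenerate singular point of focus-focus type. -/

import Mathlib

open Complex

theorem det_key (k : ℝ) (z s : ℂ) (hs : s^2 = -k) :
    Matrix.det !![z, 1, (k:ℂ), 0; -1, z, 0, (k:ℂ); -1, 0, z, 1; 0, -1, -1, z] =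
    (z-(s+I))*(z-(s-I))*(z-(-s+I))*(z-(-s-I)) := by
  rw [Matrix.det_succ_row_zero]
  simp [Fin.sum_univ_succ, Matrix.det_fin_three, Matrix.submatrix, Fin.succAbove]
  linear_combination (1 + 2*z^2 + 2*s^2 - I^2) * Complex.I_sq +
    (s^2 - k - 2*z^2 - 2 + I^2*2 + (2*z^2 - I^2 + k - s^2)*2) * hs

/-- For `k < 0`, the complex eigenvalues (the spectrum over ℂ) of the matrix
`M = [[0,-1,-k,0],[1,0,0,-k],[1,0,0,-1],[0,1,1,0]]` are exactly the four
numbers `±√(-k) ± i`; these four numbers are pairwise distinct, and each has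
nonzero real part and nonzero imaginary part. -/
theorem eigenvalues_focus_focus (k : ℝ) (hk : k < 0) :
    let s : ℂ := (Real.sqrt (-k) : ℝ)
    let M : Matrix (Fin 4) (Fin 4) ℂ :=
      !![0, -1, -(k : ℂ), 0; 1, 0, 0, -(k : ℂ); 1, 0, 0, -1; 0, 1, 1, 0]
    spectrum ℂ M = {s + I, s - I, -s + I, -s - I} ∧
    [s + I, s - I, -s + I, -s - I].Pairwise (· ≠ ·) ∧
    (∀ z ∈ spectrum ℂ M, z.re ≠ 0 ∧ z.im ≠ 0) := by
  intro s M
  have hk0 : (0:ℝ) < -k := by linarith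
  have hr : Real.sqrt (-k) > 0 := Real.sqrt_pos.mpr hk0
  have hs : s^2 = -(k:ℂ) := by
    show ((Real.sqrt (-k) : ℝ) : ℂ)^2 = -(k:ℂ)
    rw [← Complex.ofReal_pow, Real.sq_sqrt hk0.le]
    push_cast; ring
  have hspec : spectrum ℂ M = {s + I, s - I, -s + I, -s - I} := by
    ext z
    rw [spectrum.mem_iff, Matrix.isUnit_iff_isUnit_det, isUnit_iff_ne_zero, not_not]
    have hmat : (algebraMap ℂ (Matrix (Fin 4) (Fin 4) ℂ)) z - M =
        !![z, 1, (k:ℂ), 0; -1, z, 0, (k:ℂ); -1, 0, z, 1; 0, -1, -1, z] := by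
      rw [Matrix.algebraMap_eq_diagonal]
      ext i j
      fin_cases i <;> fin_cases j <;> simp [Matrix.diagonal, M]
    rw [hmat, det_key k z s hs, mul_eq_zero, mul_eq_zero, mul_eq_zero,
      sub_eq_zero, sub_eq_zero, sub_eq_zero, sub_eq_zero]
    simp only [Set.mem_insert_iff, Set.mem_singleton_iff]
    tauto
  refine ⟨hspec, ?_, ?_⟩
  · have hre : s.re = Real.sqrt (-k) := by simp [s]
    have him : s.im = 0 := by simp [s]
    have h12 : s + I ≠ s - I := by
      intro h; rw [Complex.ext_iff] at h; simp at h; linarith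
    have h13 : s + I ≠ -s + I := by
      intro h; rw [Complex.ext_iff] at h; simp [hre] at h; linarith [h.1]
    have h14 : s + I ≠ -s - I := by
      intro h; rw [Complex.ext_iff] at h; simp [hre] at h; linarith [h.1]
    have h23 : s - I ≠ -s + I := by
      intro h; rw [Complex.ext_iff] at h; simp [hre] at h; linarith [h.1]
    have h24 : s - I ≠ -s - I := by
      intro h; rw [Complex.ext_iff] at h; simp [hre] at h; linarith [h.1]
    have h34 : -s + I ≠ -s - I := by
      intro h; rw [Complex.ext_iff] at h; simp at h; linarith
    simp only [List.pairwise_cons, List.mem_cons, List.mem_singleton,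
      List.not_mem_nil, or_false, forall_eq_or_imp, forall_eq,
      List.Pairwise.nil, and_true]
    tauto
  · intro z hz
    rw [hspec] at hz
    have hre : s.re = Real.sqrt (-k) := by simp [s]
    have him : s.im = 0 := by simp [s]
    simp only [Set.mem_insert_iff, Set.mem_singleton_iff] at hz
    rcases hz with h | h | h | h <;> subst h <;>
      constructor <;> simp [hre, him] <;> positivity
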